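/- Let B ≥ 0 be a natural number and let H be a class of functions from ℝ to ℝ, each having at most B oscillations. If there exist h_1, …, h_N ∈ H and thresholds z_1, …, z_N ∈ ℝ such that all 2^N binary patterns (1{h_1(ρ) ≥ z_1}, …, 1{h_N(ρ) ≥ z_N}) are realized as ρ ranges over ℝ (i.e., the dual class H* pseudo-shatters a set of size N), then 2^N ≤ B·N + 1. -/

import Mathlib

/-- `h : ℝ → ℝ` has at most `B` oscillations: for every threshold `z`, the indicator
`ρ ↦ 1{h(ρ) ≥ z}` is piecewise constant with at most `B` discontinuities, i.e. it is
constant on every connected component of `ℝ ∖ D` for some finite set `D` with `|D| ≤ B`. -/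
def AtMostBOscillations (B : ℕ) (h : ℝ → ℝ) : Prop :=
  ∀ z : ℝ, ∃ D : Finset ℝ, D.card ≤ B ∧
    ∀ ρ₁ ρ₂ : ℝ, ρ₁ ≤ ρ₂ → (∀ d ∈ D, ¬ (ρ₁ ≤ d ∧ d ≤ ρ₂)) →
      ((z ≤ h ρ₁) ↔ (z ≤ h ρ₂))

private lemma key (N : ℕ) (v : Fin N → ℝ → Bool) (D : Fin N → Finset ℝ)
    (Hc : ∀ (i : Fin N) (ρ₁ ρ₂ : ℝ), ρ₁ ≤ ρ₂ →
      (∀ d ∈ D i, ¬(ρ₁ ≤ d ∧ d ≤ ρ₂)) → v i ρ₁ = v i ρ₂) :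
    ∀ (m : ℕ) (t : ℝ), (∑ i, ((D i).filter (· < t)).card) ≤ m →
      ∀ S : Finset (Fin N → Bool),
        (∀ p ∈ S, ∃ ρ, ρ < t ∧ (fun i => v i ρ) = p) → S.card ≤ m + 1 := by
  classical
  intro m
  induction m using Nat.strong_induction_on with
  | _ m IH =>
    intro t hsum S hS
    by_cases hU : ∃ i, ((D i).filter (· < t)).Nonempty
    case neg =>
      push_neg at hU
      have hconst : ∀ (i : Fin N) (ρ₁ ρ₂ : ℝ), ρ₁ < t → ρ₂ < t → v i ρ₁ = v i ρ₂ := by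
        have hnw : ∀ (i : Fin N) (ρ₁' ρ₂' : ℝ), ρ₂' < t →
            ∀ d ∈ D i, ¬(ρ₁' ≤ d ∧ d ≤ ρ₂') := by
          intro i ρ₁' ρ₂' h2' d hd hdc
          have : d ∈ (D i).filter (· < t) :=
            Finset.mem_filter.mpr ⟨hd, lt_of_le_of_lt hdc.2 h2'⟩
          rw [hU i] at this
          exact absurd this (Finset.notMem_empty d)
        intro i ρ₁ ρ₂ h1 h2
        rcases le_total ρ₁ ρ₂ with hle | hle
        · exact Hc i ρ₁ ρ₂ hle (hnw i ρ₁ ρ₂ h2)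
        · exact (Hc i ρ₂ ρ₁ hle (hnw i ρ₂ ρ₁ h1)).symm
      have hsub : S ⊆ {fun i => v i (t-1)} := by
        intro p hp
        obtain ⟨ρ, hρt, hρ⟩ := hS p hp
        simp only [Finset.mem_singleton]
        rw [← hρ]; funext i; exact hconst i ρ (t-1) hρt (by linarith)
      have := Finset.card_le_card hsub
      simp only [Finset.card_singleton] at this
      omega
    case pos =>
      set U : Finset ℝ := Finset.univ.biUnion (fun i => (D i).filter (· < t)) with hUdef
      have hUne : U.Nonempty := by
        obtain ⟨i, x, hx⟩ := hU
        exact ⟨x, Finset.mem_biUnion.mpr ⟨i, Finset.mem_univ i, hx⟩⟩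
      set d := U.max' hUne with hd
      have hdU : d ∈ U := U.max'_mem hUne
      have hdlt : d < t := by
        obtain ⟨i, _, hi⟩ := Finset.mem_biUnion.mp hdU
        exact (Finset.mem_filter.mp hi).2
      have hmemU : ∀ (i : Fin N) (e : ℝ), e ∈ D i → e < t → e ≤ d := fun i e he hlt =>
        U.le_max' e (Finset.mem_biUnion.mpr ⟨i, Finset.mem_univ i,
          Finset.mem_filter.mpr ⟨he, hlt⟩⟩)
      set K := Finset.univ.filter (fun i : Fin N => d ∈ D i) with hK
      set k := K.card with hkdef
      have hk1 : 1 ≤ k := by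
        obtain ⟨i, _, hi⟩ := Finset.mem_biUnion.mp hdU
        have : i ∈ K := Finset.mem_filter.mpr ⟨Finset.mem_univ i, (Finset.mem_filter.mp hi).1⟩
        exact Finset.card_pos.mpr ⟨i, this⟩
      have hsplit : ∀ i : Fin N, ((D i).filter (· < d)).card + (if d ∈ D i then 1 else 0)
          ≤ ((D i).filter (· < t)).card := by
        intro i
        by_cases hdi : d ∈ D i
        · rw [if_pos hdi]
          have hsub : insert d ((D i).filter (· < d)) ⊆ (D i).filter (· < t) := by
            intro e he
            rcases Finset.mem_insert.mp he with rfl | he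
            · exact Finset.mem_filter.mpr ⟨hdi, hdlt⟩
            · obtain ⟨h1, h2⟩ := Finset.mem_filter.mp he
              exact Finset.mem_filter.mpr ⟨h1, h2.trans hdlt⟩
          have hcard := Finset.card_le_card hsub
          rwa [Finset.card_insert_of_notMem (by simp)] at hcard
        · rw [if_neg hdi, add_zero]
          refine Finset.card_le_card (fun e he => ?_)
          obtain ⟨h1, h2⟩ := Finset.mem_filter.mp he
          exact Finset.mem_filter.mpr ⟨h1, h2.trans hdlt⟩
      have hsum' : (∑ i, ((D i).filter (· < d)).card) + k ≤ m := by
        have h1 : (∑ i, (((D i).filter (· < d)).card + if d ∈ D i then 1 else 0))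
            ≤ ∑ i, ((D i).filter (· < t)).card := Finset.sum_le_sum (fun i _ => hsplit i)
        rw [Finset.sum_add_distrib] at h1
        have h2 : (∑ i : Fin N, if d ∈ D i then 1 else 0) = k := by
          rw [hkdef, hK, Finset.card_filter]
        omega
      set s2 := ∑ i, ((D i).filter (· < d)).card with hs2
      set S' := S.filter (fun p => ∃ ρ, ρ < d ∧ (fun i => v i ρ) = p) with hS'def
      have hS'le : S'.card ≤ (m - k) + 1 := by
        refine IH (m - k) (by omega) d (by omega) S' ?_
        intro p hp
        exact (Finset.mem_filter.mp hp).2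
      set m0 := (d + t)/2 with hm0
      have hm0a : d < m0 := by rw [hm0]; linarith
      have hm0b : m0 < t := by rw [hm0]; linarith
      have hnw2 : ∀ (i : Fin N) (ρ₁ ρ₂ : ℝ), d < ρ₁ → ρ₂ < t →
          ∀ e ∈ D i, ¬(ρ₁ ≤ e ∧ e ≤ ρ₂) := by
        intro i ρ₁ ρ₂ h1 h2 e he hc
        have := hmemU i e he (lt_of_le_of_lt hc.2 h2)
        have := hc.1
        linarith
      have hplus : ∀ ρ, d < ρ → ρ < t → (fun i => v i ρ) = (fun i => v i m0) := by
        intro ρ h1 h2; funext i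
        rcases le_total ρ m0 with hle | hle
        · exact Hc i ρ m0 hle (hnw2 i ρ m0 h1 hm0b)
        · exact (Hc i m0 ρ hle (hnw2 i m0 ρ hm0a h2)).symm
      set pd : Fin N → Bool := fun i => v i d with hpd
      set pp : Fin N → Bool := fun i => v i m0 with hpp
      have hsub : S ⊆ insert pd (insert pp S') := by
        intro p hp
        obtain ⟨ρ, hρt, hρ⟩ := hS p hp
        rcases lt_trichotomy ρ d with hc | hc | hc
        · exact Finset.mem_insert.mpr (Or.inr (Finset.mem_insert.mpr (Or.inr
            (Finset.mem_filter.mpr ⟨hp, ρ, hc, hρ⟩))))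
        · subst hc
          exact Finset.mem_insert.mpr (Or.inl (by rw [← hρ, hpd]))
        · have h3 := hplus ρ hc hρt
          exact Finset.mem_insert.mpr (Or.inr (Finset.mem_insert.mpr (Or.inl
            (by rw [← hρ, h3, hpp]))))
      by_cases hk2 : 2 ≤ k
      · have hc1 := Finset.card_le_card hsub
        have hc2 := Finset.card_insert_le pd (insert pp S')
        have hc3 := Finset.card_insert_le pp S'
        omega
      · have hk : k = 1 := by omega
        obtain ⟨i₀, hKi⟩ := Finset.card_eq_one.mp (hkdef ▸ hk)
        have hi₀ : d ∈ D i₀ := by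
          have : i₀ ∈ K := hKi ▸ Finset.mem_singleton_self i₀
          exact (Finset.mem_filter.mp this).2
        have huniq : ∀ j : Fin N, d ∈ D j → j = i₀ := by
          intro j hj
          have : j ∈ K := Finset.mem_filter.mpr ⟨Finset.mem_univ j, hj⟩
          rw [hKi] at this
          exact Finset.mem_singleton.mp this
        set U' := Finset.univ.biUnion (fun i : Fin N => (D i).filter (· < d)) with hU'def
        have hU'lt : ∀ e ∈ U', e < d := by
          intro e he
          obtain ⟨i, _, hi⟩ := Finset.mem_biUnion.mp he
          exact (Finset.mem_filter.mp hi).2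
        set M1 : ℝ := if h : U'.Nonempty then max (U'.max' h) (d-1) else d - 1 with hM1
        have hM1lt : M1 < d := by
          rw [hM1]; split
          · exact max_lt (hU'lt _ (U'.max'_mem _)) (by linarith)
          · linarith
        have hM1ge : ∀ e ∈ U', e ≤ M1 := by
          intro e he
          rw [hM1, dif_pos ⟨e, he⟩]
          exact le_max_of_le_left (U'.le_max' e he)
        set ρm := (M1 + d)/2 with hρmdef
        have hρm1 : M1 < ρm := by rw [hρmdef]; linarith
        have hρm2 : ρm < d := by rw [hρmdef]; linarith
        have hoff : ∀ j : Fin N, j ≠ i₀ → ∀ ρ, d ≤ ρ → ρ < t → v j ρ = v j ρm := by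
          intro j hj ρ h1 h2
          refine (Hc j ρm ρ (by linarith) ?_).symm
          intro e he hc
          have hetd : e ≤ d := hmemU j e he (lt_of_le_of_lt hc.2 h2)
          rcases eq_or_lt_of_le hetd with rfl | hlt
          · exact hj (huniq j he)
          · have heU' : e ∈ U' := Finset.mem_biUnion.mpr ⟨j, Finset.mem_univ j,
              Finset.mem_filter.mpr ⟨he, hlt⟩⟩
            have := hM1ge e heU'
            have := hc.1
            linarith
        set pm : Fin N → Bool := fun i => v i ρm with hpm
        have hpm_in : ∀ p ∈ S, p = pm → p ∈ S' := by
          intro p hp hpe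
          exact Finset.mem_filter.mpr ⟨hp, ρm, hρm2, by rw [hpe, hpm]⟩
        have hoffd : ∀ j : Fin N, j ≠ i₀ → pd j = pm j := fun j hj =>
          hoff j hj d le_rfl hdlt
        have hoffp : ∀ j : Fin N, j ≠ i₀ → pp j = pm j := fun j hj =>
          hoff j hj m0 (le_of_lt hm0a) hm0b
        have hfinal : ∃ q : Fin N → Bool, S ⊆ insert q S' := by
          by_cases hdp : pd = pp
          · refine ⟨pd, fun p hp => ?_⟩
            rcases Finset.mem_insert.mp (hsub hp) with h1 | h1
            · exact Finset.mem_insert.mpr (Or.inl h1)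
            · rcases Finset.mem_insert.mp h1 with h2 | h2
              · exact Finset.mem_insert.mpr (Or.inl (h2.trans hdp.symm))
              · exact Finset.mem_insert.mpr (Or.inr h2)
          · have hi0ne : pd i₀ ≠ pp i₀ := by
              intro hcontra
              apply hdp
              funext j
              by_cases hj : j = i₀
              · subst hj; exact hcontra
              · rw [hoffd j hj, ← hoffp j hj]
            by_cases hc1 : pm i₀ = pd i₀
            · have hpmpd : pm = pd := by
                funext j
                by_cases hj : j = i₀
                · subst hj; exact hc1
                · exact (hoffd j hj).symm
              refine ⟨pp, fun p hp => ?_⟩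
              rcases Finset.mem_insert.mp (hsub hp) with h1 | h1
              · exact Finset.mem_insert.mpr (Or.inr (hpm_in p hp (h1.trans hpmpd.symm)))
              · exact h1
            · have hbool : ∀ a b c : Bool, a ≠ b → ¬(c = a) → c = b := by decide
              have hc2 : pm i₀ = pp i₀ := hbool _ _ _ hi0ne hc1
              have hpmpp : pm = pp := by
                funext j
                by_cases hj : j = i₀
                · subst hj; exact hc2
                · exact (hoffp j hj).symm
              refine ⟨pd, fun p hp => ?_⟩
              rcases Finset.mem_insert.mp (hsub hp) with h1 | h1
              · exact Finset.mem_insert.mpr (Or.inl h1)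
              · rcases Finset.mem_insert.mp h1 with h2 | h2
                · exact Finset.mem_insert.mpr (Or.inr (hpm_in p hp (h2.trans hpmpp.symm)))
                · exact Finset.mem_insert.mpr (Or.inr h2)
        obtain ⟨q, hq⟩ := hfinal
        have hc1 := Finset.card_le_card hq
        have hc2 := Finset.card_insert_le q S'
        omega

/-- if every function in `H` has at most `B` oscillations and the dual class
`H*` pseudo-shatters `h₁, …, h_N ∈ H` (with thresholds `z₁, …, z_N`, all `2^N` sign patterns
being realized as `ρ` ranges over `ℝ`), then `2^N ≤ B·N + 1`. -/
theorem stmt_5 (B : ℕ) (H : Set (ℝ → ℝ)) (hH : ∀ h ∈ H, AtMostBOscillations B h)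
    (N : ℕ) (h : Fin N → ℝ → ℝ) (hmem : ∀ i, h i ∈ H) (z : Fin N → ℝ)
    (hshatter : ∀ b : Fin N → Bool, ∃ ρ : ℝ, ∀ i, (z i ≤ h i ρ ↔ b i = true)) :
    2 ^ N ≤ B * N + 1 := by
  classical
  choose D hcard hcond using fun i => hH (h i) (hmem i) (z i)
  set v : Fin N → ℝ → Bool := fun i ρ => decide (z i ≤ h i ρ) with hv
  have Hc : ∀ (i : Fin N) (ρ₁ ρ₂ : ℝ), ρ₁ ≤ ρ₂ →
      (∀ d ∈ D i, ¬(ρ₁ ≤ d ∧ d ≤ ρ₂)) → v i ρ₁ = v i ρ₂ := by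
    intro i ρ₁ ρ₂ h12 hav
    rw [hv]
    simp only [decide_eq_decide]
    exact hcond i ρ₁ ρ₂ h12 hav
  set T : Finset ℝ := Finset.univ.biUnion D with hT
  obtain ⟨q, hq⟩ : ∃ q : ℝ, ∀ d ∈ T, d < q := by
    by_cases hne : T.Nonempty
    · exact ⟨T.max' hne + 1, fun d hd => lt_of_le_of_lt (T.le_max' d hd) (by linarith)⟩
    · exact ⟨0, fun d hd => absurd ⟨d, hd⟩ hne⟩
  set t := q + 1 with ht
  have hqt : q < t := by rw [ht]; linarith
  have hreal : ∀ p ∈ (Finset.univ : Finset (Fin N → Bool)),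
      ∃ ρ, ρ < t ∧ (fun i => v i ρ) = p := by
    intro p _
    obtain ⟨ρ, hρ⟩ := hshatter p
    have hpat : (fun i => v i ρ) = p := by
      funext i
      have hi := hρ i
      rw [hv]
      cases hpi : p i
      · simp only [hpi] at hi
        simp [hi]
      · simp only [hpi] at hi
        simp [hi.mpr trivial]
    by_cases hρt : ρ < t
    · exact ⟨ρ, hρt, hpat⟩
    · refine ⟨q, hqt, ?_⟩
      rw [← hpat]
      funext i
      refine Hc i q ρ (by linarith) ?_
      intro d hd hc
      have : d < q := hq d (Finset.mem_biUnion.mpr ⟨i, Finset.mem_univ i, hd⟩)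
      have := hc.1
      linarith
  have hkey := key N v D Hc (B * N) t ?_ Finset.univ hreal
  · have hcardu : (Finset.univ : Finset (Fin N → Bool)).card = 2 ^ N := by
      simp [Finset.card_univ]
    omega
  · calc (∑ i, ((D i).filter (· < t)).card)
        ≤ ∑ i : Fin N, B := by
          refine Finset.sum_le_sum (fun i _ => ?_)
          exact le_trans (Finset.card_le_card (Finset.filter_subset _ _)) (hcard i)
      _ = B * N := by simp [Finset.sum_const, mul_comm]
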